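/- Let (X, ℬ, μ, T) be a conservative, ergodic, measure-preserving transformation of a σ-finite measure space. Let f, g ∈ L¹(X, μ) with g > 0 μ-almost everywhere and ∫_X g dμ ≠ 0. Then, μ-almost everywhere, lim_{n→∞} S_n f / S_n g = (∫_X f dμ) / (∫_X g dμ). (Hopf's theorem, ergodic version.) -/

import Mathlib

open MeasureTheory Filter Topology

/-- `T` is conservative w.r.t. `μ`: every set of positive measure returns to itself. -/
def IsConservative {X : Type*} [MeasurableSpace X] (T : X → X) (μ : Measure X) : Prop :=
  ∀ A : Set X, MeasurableSet A → 0 < μ A → ∃ n ≥ 1, 0 < μ (A ∩ (T^[n]) ⁻¹' A)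

/-- Birkhoff sum `S_n f = ∑_{k<n} f ∘ T^k`. -/
noncomputable def birkhoff {X : Type*} (T : X → X) (f : X → ℝ) (n : ℕ) (x : X) : ℝ :=
  ∑ k ∈ Finset.range n, f (T^[k] x)

namespace HopfAux


variable {X : Type*} [MeasurableSpace X] {μ : Measure X} {T : X → X}

/-- Running maximum of Birkhoff sums `S_0, ..., S_N`. -/
noncomputable def hmax (T : X → X) (h : X → ℝ) : ℕ → X → ℝ
  | 0 => fun _ => 0
  | N + 1 => fun x => max (hmax T h N x) (birkhoffSum T h (N + 1) x)

lemma hmax_nonneg (h : X → ℝ) : ∀ N x, 0 ≤ hmax T h N x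
  | 0, x => le_refl _
  | N + 1, x => le_trans (hmax_nonneg h N x) (le_max_left _ _)

lemma hmax_mono (h : X → ℝ) (N : ℕ) (x : X) : hmax T h N x ≤ hmax T h (N + 1) x :=
  le_max_left _ _

lemma birkhoffSum_le_hmax (h : X → ℝ) : ∀ N n, n ≤ N → ∀ x, birkhoffSum T h n x ≤ hmax T h N x
  | 0, n, hn, x => by
    interval_cases n
    simp [birkhoffSum_zero, hmax]
  | N + 1, n, hn, x => by
    rcases Nat.lt_or_ge n (N + 1) with h1 | h1
    · exact le_trans (birkhoffSum_le_hmax h N n (by omega) x) (le_max_left _ _)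
    · have : n = N + 1 := by omega
      subst this
      exact le_max_right _ _

lemma hmax_succ_eq (h : X → ℝ) : ∀ N x, hmax T h (N + 1) x = max 0 (h x + hmax T h N (T x))
  | 0, x => by
    simp [hmax, birkhoffSum_one]
  | N + 1, x => by
    have : hmax T h (N + 2) x = max (hmax T h (N + 1) x) (birkhoffSum T h (N + 2) x) := rfl
    rw [this, hmax_succ_eq h N x, birkhoffSum_succ' T h (N + 1) x]
    show _ = max 0 (h x + max (hmax T h N (T x)) (birkhoffSum T h (N + 1) (T x)))
    rw [← max_add_add_left, ← max_assoc]

lemma measurable_birkhoffSum (hTm : Measurable T) {h : X → ℝ} (hh : Measurable h) (n : ℕ) :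
    Measurable (birkhoffSum T h n) := by
  apply Finset.measurable_sum
  intro k _
  exact hh.comp (hTm.iterate k)

lemma measurable_hmax (hTm : Measurable T) {h : X → ℝ} (hh : Measurable h) :
    ∀ N, Measurable (hmax T h N)
  | 0 => measurable_const
  | N + 1 => (measurable_hmax hTm hh N).max (measurable_birkhoffSum hTm hh (N + 1))

lemma integrable_birkhoffSum (hT : MeasurePreserving T μ μ) {h : X → ℝ} (hh : Integrable h μ)
    (n : ℕ) : Integrable (birkhoffSum T h n) μ := by
  have : ∀ k : ℕ, Integrable (fun x => h (T^[k] x)) μ := fun k =>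
    ((hT.iterate k).integrable_comp hh.aestronglyMeasurable).mpr hh
  exact integrable_finset_sum _ (fun k _ => this k)

lemma integrable_hmax (hT : MeasurePreserving T μ μ) {h : X → ℝ} (hh : Integrable h μ) :
    ∀ N, Integrable (hmax T h N) μ
  | 0 => by simpa [hmax] using integrable_const (0 : ℝ)
  | N + 1 => (integrable_hmax hT hh N).sup (integrable_birkhoffSum hT hh (N + 1))

lemma integral_comp_T (hT : MeasurePreserving T μ μ) {G : X → ℝ}
    (hG : AEStronglyMeasurable G μ) : ∫ x, G (T x) ∂μ = ∫ x, G x ∂μ := by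
  have := integral_map (φ := T) hT.measurable.aemeasurable (f := G) (by rwa [hT.map_eq])
  rw [hT.map_eq] at this
  exact this.symm



lemma maximal (hT : MeasurePreserving T μ μ) {h : X → ℝ}
    (hhm : Measurable h) (hh : Integrable h μ)
    (hyp : ∀ᵐ x ∂μ, ∃ n : ℕ, 0 < birkhoffSum T h (n + 1) x) :
    0 ≤ ∫ x, h x ∂μ := by
  have hTm : Measurable T := hT.measurable
  set G := hmax T h with hG
  set E : ℕ → Set X := fun N => {x | 0 < h x + G N (T x)} with hE
  have hGm : ∀ N, Measurable (G N) := measurable_hmax hTm hhm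
  have hGi : ∀ N, Integrable (G N) μ := integrable_hmax hT hh
  have hGTi : ∀ N, Integrable (fun x => G N (T x)) μ := fun N =>
    ((hT.integrable_comp (hGm N).aestronglyMeasurable).mpr (hGi N))
  have hEmeas : ∀ N, MeasurableSet (E N) := fun N =>
    measurableSet_lt measurable_const (hhm.add ((hGm N).comp hTm))
  -- each set integral is nonneg
  have key : ∀ N, 0 ≤ ∫ x in E N, h x ∂μ := by
    intro N
    have heq : ∀ x ∈ E N, h x = hmax T h (N + 1) x - G N (T x) := by
      intro x hx
      rw [hmax_succ_eq h N x, max_eq_right (le_of_lt hx)]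
      ring
    have h1 : ∫ x in E N, h x ∂μ
        = ∫ x in E N, (hmax T h (N + 1) x - G N (T x)) ∂μ :=
      setIntegral_congr_fun (hEmeas N) heq
    have h2 : ∫ x in E N, (hmax T h (N + 1) x - G N (T x)) ∂μ
        = (∫ x in E N, hmax T h (N + 1) x ∂μ) - ∫ x in E N, G N (T x) ∂μ :=
      integral_sub ((hGi (N + 1)).integrableOn) ((hGTi N).integrableOn)
    have h3 : ∫ x in E N, hmax T h (N + 1) x ∂μ = ∫ x, hmax T h (N + 1) x ∂μ := by
      have hcompl : ∫ x in (E N)ᶜ, hmax T h (N + 1) x ∂μ = 0 := by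
        apply setIntegral_eq_zero_of_forall_eq_zero
        intro x hx
        have hx' : h x + G N (T x) ≤ 0 := not_lt.mp hx
        rw [hmax_succ_eq h N x, max_eq_left hx']
      rw [← integral_add_compl (hEmeas N) (hGi (N + 1)), hcompl, add_zero]
    have h4 : ∫ x in E N, G N (T x) ∂μ ≤ ∫ x, hmax T h (N + 1) x ∂μ := by
      calc ∫ x in E N, G N (T x) ∂μ ≤ ∫ x, G N (T x) ∂μ :=
            setIntegral_le_integral (hGTi N)
              (Eventually.of_forall fun x => hmax_nonneg h N (T x))
        _ = ∫ x, G N x ∂μ := integral_comp_T hT (hGm N).aestronglyMeasurable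
        _ ≤ ∫ x, hmax T h (N + 1) x ∂μ :=
            integral_mono (hGi N) (hGi (N + 1)) (fun x => hmax_mono h N x)
    rw [h1, h2, h3]
    linarith
  -- the sets increase and a.e. cover everything
  have hEmono : ∀ N, E N ⊆ E (N + 1) := by
    intro N x hx
    have : G N (T x) ≤ G (N + 1) (T x) := hmax_mono h N (T x)
    simp only [hE, Set.mem_setOf_eq] at hx ⊢
    linarith
  have hEmono' : ∀ {M N : ℕ}, M ≤ N → E M ⊆ E N := by
    intro M N hMN
    induction hMN with
    | refl => exact subset_rfl
    | step _ ih => exact Set.Subset.trans ih (hEmono _)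
  have hcover : ∀ᵐ x ∂μ, x ∈ ⋃ N, E N := by
    filter_upwards [hyp] with x hx
    obtain ⟨n, hn⟩ := hx
    rw [birkhoffSum_succ' T h n x] at hn
    have : birkhoffSum T h n (T x) ≤ G n (T x) := birkhoffSum_le_hmax h n n le_rfl (T x)
    exact Set.mem_iUnion.mpr ⟨n, by simp only [hE, Set.mem_setOf_eq]; linarith⟩
  -- pass to the limit
  have htend : Tendsto (fun N => ∫ x in E N, h x ∂μ) atTop (𝓝 (∫ x, h x ∂μ)) := by
    have hind : ∀ N, ∫ x in E N, h x ∂μ = ∫ x, (E N).indicator h x ∂μ :=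
      fun N => (integral_indicator (hEmeas N)).symm
    have heq2 : ∫ x, h x ∂μ = ∫ x, (⋃ N, E N).indicator h x ∂μ := by
      apply integral_congr_ae
      filter_upwards [hcover] with x hx
      rw [Set.indicator_of_mem hx]
    rw [heq2]
    simp only [hind]
    apply tendsto_integral_of_dominated_convergence (fun x => |h x|)
    · intro N
      exact (hhm.indicator (hEmeas N)).aestronglyMeasurable
    · exact hh.abs
    · intro N
      apply Eventually.of_forall
      intro x
      calc ‖(E N).indicator h x‖ ≤ ‖h x‖ := norm_indicator_le_norm_self h x
        _ = |h x| := Real.norm_eq_abs _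
    · apply Eventually.of_forall
      intro x
      by_cases hx : x ∈ ⋃ N, E N
      · obtain ⟨N0, hN0⟩ := Set.mem_iUnion.mp hx
        rw [Set.indicator_of_mem hx]
        apply tendsto_const_nhds.congr'
        filter_upwards [eventually_ge_atTop N0] with N hN
        rw [Set.indicator_of_mem (hEmono' hN hN0)]
      · have : ∀ N, x ∉ E N := fun N hN => hx (Set.mem_iUnion.mpr ⟨N, hN⟩)
        rw [Set.indicator_of_notMem hx]
        simpa only [Set.indicator_of_notMem (this _)] using
          (tendsto_const_nhds : Tendsto (fun _ : ℕ => (0 : ℝ)) atTop (𝓝 0))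
  exact ge_of_tendsto' htend key



lemma sums_tendsto_atTop (hT : MeasurePreserving T μ μ)
    (hcons : IsConservative T μ)
    (herg : ∀ A : Set X, MeasurableSet A → T ⁻¹' A = A → μ A = 0 ∨ μ Aᶜ = 0)
    {g : X → ℝ} (hgm : Measurable g) (hg : Integrable g μ)
    (hgpos : ∀ᵐ x ∂μ, 0 < g x) (hgint : ∫ x, g x ∂μ ≠ 0) :
    ∀ᵐ x ∂μ, Tendsto (fun n => birkhoffSum T g n x) atTop atTop := by
  have hTm : Measurable T := hT.measurable
  -- the measure is nonzero
  have hμ : μ ≠ 0 := by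
    intro h0
    rw [h0] at hgint
    simp at hgint
  -- find ε > 0 with μ {x | ε < g x} ≠ 0
  obtain ⟨ε, hε, hAν⟩ : ∃ ε : ℝ, 0 < ε ∧ μ {x | ε < g x} ≠ 0 := by
    by_contra hcon
    push_neg at hcon
    have hnull : ∀ n : ℕ, μ {x | 1 / (n + 1 : ℝ) < g x} = 0 := fun n =>
      hcon _ (by positivity)
    have hsub : {x | 0 < g x} ⊆ ⋃ n : ℕ, {x | 1 / (n + 1 : ℝ) < g x} := by
      intro x hx
      obtain ⟨n, hn⟩ := exists_nat_one_div_lt (show (0:ℝ) < g x from hx)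
      exact Set.mem_iUnion.mpr ⟨n, hn⟩
    have h1 : μ {x | 0 < g x} = 0 :=
      measure_mono_null hsub (measure_iUnion_null hnull)
    have h2 : μ {x | ¬ 0 < g x} = 0 := hgpos
    have huniv : μ Set.univ ≤ μ {x | 0 < g x} + μ {x | ¬ 0 < g x} := by
      refine le_trans (measure_mono ?_) (measure_union_le _ _)
      intro x _
      by_cases h : 0 < g x
      exacts [Or.inl h, Or.inr h]
    rw [h1, h2, add_zero, nonpos_iff_eq_zero] at huniv
    exact hμ (Measure.measure_univ_eq_zero.mp huniv)
  set A : Set X := {x | ε < g x} with hA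
  have hAmeas : MeasurableSet A := measurableSet_lt measurable_const hgm
  -- mathlib Conservative structure
  have hconsM : Conservative T μ := by
    refine ⟨hT.quasiMeasurePreserving, fun s hs h0 => ?_⟩
    obtain ⟨n, hn1, hpos⟩ := hcons s hs (pos_iff_ne_zero.mpr h0)
    obtain ⟨x, hx⟩ := nonempty_of_measure_ne_zero hpos.ne'
    exact ⟨x, hx.1, n, by omega, hx.2⟩
  -- infinitely recurrent points to A
  set D : Set X := {x | ∀ N : ℕ, ∃ n, N ≤ n ∧ T^[n] x ∈ A} with hD
  have hDmeas : MeasurableSet D := by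
    have : D = ⋂ N : ℕ, ⋃ n : ℕ, ⋃ _ : N ≤ n, T^[n] ⁻¹' A := by
      ext x
      simp [hD, Set.mem_iInter, Set.mem_iUnion]
    rw [this]
    exact MeasurableSet.iInter fun N => MeasurableSet.iUnion fun n =>
      MeasurableSet.iUnion fun _ => (hTm.iterate n) hAmeas
  have hDinv : T ⁻¹' D = D := by
    ext x
    simp only [Set.mem_preimage, hD, Set.mem_setOf_eq]
    constructor
    · intro hx N
      obtain ⟨n, hn, hmem⟩ := hx N
      exact ⟨n + 1, by omega, by rwa [Function.iterate_succ_apply]⟩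
    · intro hx N
      obtain ⟨n, hn, hmem⟩ := hx (N + 1)
      refine ⟨n - 1, by omega, ?_⟩
      have hn' : n - 1 + 1 = n := by omega
      rw [← hn'] at hmem
      rwa [Function.iterate_succ_apply] at hmem
  have hDae : ∀ᵐ x ∂μ, x ∈ D := by
    rcases herg D hDmeas hDinv with h0 | h0
    · exfalso
      have hrec := hconsM.ae_mem_imp_frequently_image_mem hAmeas.nullMeasurableSet
      have hnotD : ∀ᵐ x ∂μ, x ∉ D := by
        rw [ae_iff]
        simpa using h0
      have : ∀ᵐ x ∂μ, x ∉ A := by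
        filter_upwards [hrec, hnotD] with x h1 h2
        intro hxA
        apply h2
        intro N
        obtain ⟨n, hn, hmem⟩ := (frequently_atTop.mp (h1 hxA)) N
        exact ⟨n, hn, hmem⟩
      exact hAν (by rw [ae_iff] at this; simpa using this)
    · rw [ae_iff]
      exact h0
  -- positivity along the orbits
  have horb : ∀ᵐ x ∂μ, ∀ n : ℕ, 0 < g (T^[n] x) := by
    rw [ae_all_iff]
    intro n
    have h0 : μ {x | ¬ 0 < g x} = 0 := hgpos
    have := (hT.iterate n).quasiMeasurePreserving.preimage_null h0
    rw [ae_iff]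
    exact this
  filter_upwards [hDae, horb] with x hxD hxg
  have hmono : Monotone fun n => birkhoffSum T g n x := by
    apply monotone_nat_of_le_succ
    intro n
    rw [birkhoffSum_succ]
    exact le_add_of_nonneg_right (hxg n).le
  apply tendsto_atTop_atTop_of_monotone hmono
  intro M
  have hclaim : ∀ K : ℕ, ∃ n, (K : ℝ) * ε ≤ birkhoffSum T g n x := by
    intro K
    induction K with
    | zero => exact ⟨0, by simp⟩
    | succ K ih =>
      obtain ⟨n, hn⟩ := ih
      obtain ⟨m, hm, hmA⟩ := hxD n
      refine ⟨m + 1, ?_⟩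
      have h1 : birkhoffSum T g n x ≤ birkhoffSum T g m x := hmono hm
      have h2 : ε < g (T^[m] x) := hmA
      rw [birkhoffSum_succ]
      push_cast
      nlinarith
  obtain ⟨K, hK⟩ := exists_nat_ge (M / ε)
  obtain ⟨n, hn⟩ := hclaim K
  exact ⟨n, le_trans ((div_le_iff₀ hε).mp hK) hn⟩



lemma core (hT : MeasurePreserving T μ μ)
    (herg : ∀ A : Set X, MeasurableSet A → T ⁻¹' A = A → μ A = 0 ∨ μ Aᶜ = 0)
    {f g : X → ℝ} (hfm : Measurable f) (hf : Integrable f μ)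
    (hgm : Measurable g) (hg : Integrable g μ)
    (hIg : 0 < ∫ x, g x ∂μ)
    (hSg : ∀ᵐ x ∂μ, Tendsto (fun n => birkhoffSum T g n x) atTop atTop)
    (c : ℝ) (hc : ∫ x, f x ∂μ < c * ∫ x, g x ∂μ) :
    ∀ᵐ x ∂μ, ∀ᶠ n in atTop, birkhoffSum T f n x / birkhoffSum T g n x < c := by
  have hTm : Measurable T := hT.measurable
  -- choose c' strictly between the integral ratio and c
  obtain ⟨c', hc'1, hc'2⟩ := exists_between ((div_lt_iff₀ hIg).mpr hc)
  have hc'I : ∫ x, f x ∂μ < c' * ∫ x, g x ∂μ := (div_lt_iff₀ hIg).mp hc'1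
  set h : X → ℝ := fun x => f x - c' * g x with hh
  have hhm : Measurable h := hfm.sub (hgm.const_mul c')
  have hhi : Integrable h μ := hf.sub (hg.const_mul c')
  have hIh : ∫ x, h x ∂μ < 0 := by
    rw [hh]
    rw [integral_sub hf (hg.const_mul c'), integral_const_mul]
    linarith
  have hsum : ∀ n x, birkhoffSum T h n x
      = birkhoffSum T f n x - c' * birkhoffSum T g n x := by
    intro n x
    simp only [birkhoffSum, hh, Finset.sum_sub_distrib, Finset.mul_sum]
  set C : Set X := {x | ∀ M : ℝ, ∃ n, M < birkhoffSum T h n x} with hC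
  have hCmeas : MeasurableSet C := by
    have : C = ⋂ M : ℕ, ⋃ n : ℕ, {x | (M : ℝ) < birkhoffSum T h n x} := by
      ext x
      simp only [hC, Set.mem_setOf_eq, Set.mem_iInter, Set.mem_iUnion]
      constructor
      · intro hx M
        exact hx M
      · intro hx M
        obtain ⟨K, hK⟩ := exists_nat_ge M
        obtain ⟨n, hn⟩ := hx K
        exact ⟨n, lt_of_le_of_lt hK hn⟩
    rw [this]
    exact MeasurableSet.iInter fun M => MeasurableSet.iUnion fun n =>
      measurableSet_lt measurable_const (measurable_birkhoffSum hTm hhm n)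
  have hCinv : T ⁻¹' C = C := by
    ext x
    simp only [Set.mem_preimage, hC, Set.mem_setOf_eq]
    constructor
    · intro hx M
      obtain ⟨n, hn⟩ := hx (M - h x)
      refine ⟨n + 1, ?_⟩
      rw [birkhoffSum_succ']
      linarith
    · intro hx M
      obtain ⟨n, hn⟩ := hx (max (M + h x) 0)
      match n with
      | 0 =>
        exfalso
        rw [birkhoffSum_zero] at hn
        exact absurd hn (not_lt.mpr (le_max_right _ _))
      | n + 1 =>
        refine ⟨n, ?_⟩
        rw [birkhoffSum_succ'] at hn
        have := le_max_left (M + h x) 0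
        linarith
  rcases herg C hCmeas hCinv with h0 | h0
  · -- the "bounded" case : a.e. the sums S_n h are bounded above
    have hnotC : ∀ᵐ x ∂μ, x ∉ C := by
      rw [ae_iff]
      simpa using h0
    filter_upwards [hnotC, hSg] with x hxC hxg
    rw [hC, Set.mem_setOf_eq] at hxC
    push_neg at hxC
    obtain ⟨M, hM⟩ := hxC
    have hev : ∀ᶠ n in atTop, max (M / (c - c')) 0 < birkhoffSum T g n x :=
      hxg.eventually_gt_atTop _
    filter_upwards [hev] with n hn
    have hg0 : 0 < birkhoffSum T g n x := lt_of_le_of_lt (le_max_right _ _) hn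
    have h1 : birkhoffSum T f n x = birkhoffSum T h n x + c' * birkhoffSum T g n x := by
      rw [hsum]; ring
    rw [h1, add_div, mul_div_assoc, div_self hg0.ne', mul_one]
    have h2 : birkhoffSum T h n x ≤ M := hM n
    have h3 : M / (c - c') < birkhoffSum T g n x := lt_of_le_of_lt (le_max_left _ _) hn
    have h4 : M < (c - c') * birkhoffSum T g n x := by
      rw [div_lt_iff₀ (by linarith : (0:ℝ) < c - c')] at h3
      linarith [h3]
    have h5 : birkhoffSum T h n x / birkhoffSum T g n x < c - c' := by
      rw [div_lt_iff₀ hg0]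
      nlinarith
    linarith
  · -- the "unbounded" case contradicts the maximal ergodic lemma
    exfalso
    have hae : ∀ᵐ x ∂μ, x ∈ C := by
      rw [ae_iff]
      exact h0
    have hyp : ∀ᵐ x ∂μ, ∃ n : ℕ, 0 < birkhoffSum T h (n + 1) x := by
      filter_upwards [hae] with x hx
      obtain ⟨n, hn⟩ := hx 0
      match n with
      | 0 =>
        rw [birkhoffSum_zero] at hn
        exact absurd hn (lt_irrefl 0)
      | n + 1 => exact ⟨n, hn⟩
    linarith [maximal hT hhm hhi hyp]


end HopfAux

/-- Hopf's ratio ergodic theorem, ergodic version. -/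
theorem hopf_ergodic {X : Type*} [MeasurableSpace X] (μ : Measure X) [SigmaFinite μ]
    (T : X → X) (hT : MeasurePreserving T μ μ) (hcons : IsConservative T μ)
    (herg : ∀ A : Set X, MeasurableSet A → T ⁻¹' A = A → μ A = 0 ∨ μ Aᶜ = 0)
    (f g : X → ℝ) (hf : Integrable f μ) (hg : Integrable g μ)
    (hgpos : ∀ᵐ x ∂μ, 0 < g x) (hgint : ∫ x, g x ∂μ ≠ 0) :
    ∀ᵐ x ∂μ,
      Tendsto (fun n => birkhoff T f n x / birkhoff T g n x) atTop
        (𝓝 ((∫ x, f x ∂μ) / (∫ x, g x ∂μ))) := by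
  classical
  have hTm : Measurable T := hT.measurable
  -- measurable representatives of f and g
  set f' : X → ℝ := hf.1.mk f with hf'def
  set g' : X → ℝ := hg.1.mk g with hg'def
  have hf'm : Measurable f' := hf.1.stronglyMeasurable_mk.measurable
  have hg'm : Measurable g' := hg.1.stronglyMeasurable_mk.measurable
  have hff' : f =ᵐ[μ] f' := hf.1.ae_eq_mk
  have hgg' : g =ᵐ[μ] g' := hg.1.ae_eq_mk
  have hf' : Integrable f' μ := hf.congr hff'
  have hg' : Integrable g' μ := hg.congr hgg'
  have hg'pos : ∀ᵐ x ∂μ, 0 < g' x := by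
    filter_upwards [hgpos, hgg'] with x h1 h2
    rwa [← h2]
  have hIf : ∫ x, f' x ∂μ = ∫ x, f x ∂μ := integral_congr_ae hff'.symm
  have hJ : ∫ x, g' x ∂μ = ∫ x, g x ∂μ := integral_congr_ae hgg'.symm
  have hg'int : ∫ x, g' x ∂μ ≠ 0 := by rwa [hJ]
  have hIg : 0 < ∫ x, g' x ∂μ :=
    lt_of_le_of_ne (integral_nonneg_of_ae (hg'pos.mono fun x hx => hx.le)) (Ne.symm hg'int)
  -- a.e. the Birkhoff sums of f, g and f', g' agree
  have horb : ∀ᵐ x ∂μ, ∀ k : ℕ, f (T^[k] x) = f' (T^[k] x) ∧ g (T^[k] x) = g' (T^[k] x) := by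
    rw [ae_all_iff]
    intro k
    have h1 : μ {y | ¬ (f y = f' y ∧ g y = g' y)} = 0 := by
      have : ∀ᵐ y ∂μ, f y = f' y ∧ g y = g' y := hff'.and hgg'
      rwa [ae_iff] at this
    have h2 := (hT.iterate k).quasiMeasurePreserving.preimage_null h1
    rw [ae_iff]
    exact h2
  have hbirk : ∀ᵐ x ∂μ, ∀ n : ℕ, birkhoff T f n x = birkhoffSum T f' n x ∧
      birkhoff T g n x = birkhoffSum T g' n x := by
    filter_upwards [horb] with x hx n
    constructor
    · exact Finset.sum_congr rfl fun k _ => (hx k).1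
    · exact Finset.sum_congr rfl fun k _ => (hx k).2
  -- Birkhoff sums of g' tend to infinity a.e.
  have hSg : ∀ᵐ x ∂μ, Tendsto (fun n => birkhoffSum T g' n x) atTop atTop :=
    HopfAux.sums_tendsto_atTop hT hcons herg hg'm hg' hg'pos hg'int
  set L : ℝ := (∫ x, f' x ∂μ) / (∫ x, g' x ∂μ) with hL
  have hLeq : (∫ x, f x ∂μ) / (∫ x, g x ∂μ) = L := by rw [hL, hIf, hJ]
  rw [hLeq]
  -- upper bounds
  have hupper : ∀ᵐ x ∂μ, ∀ q : ℚ, L < (q : ℝ) →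
      ∀ᶠ n in atTop, birkhoffSum T f' n x / birkhoffSum T g' n x < (q : ℝ) := by
    rw [ae_all_iff]
    intro q
    by_cases hq : L < (q : ℝ)
    · have hc : ∫ x, f' x ∂μ < (q : ℝ) * ∫ x, g' x ∂μ := by
        rw [hL] at hq
        exact (div_lt_iff₀ hIg).mp hq
      filter_upwards [HopfAux.core hT herg hf'm hf' hg'm hg' hIg hSg (q : ℝ) hc] with x hx _
      exact hx
    · exact Eventually.of_forall fun x hcon => absurd hcon hq
  -- lower bounds, by applying the same to -f'
  have hlower : ∀ᵐ x ∂μ, ∀ q : ℚ, (q : ℝ) < L →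
      ∀ᶠ n in atTop, (q : ℝ) < birkhoffSum T f' n x / birkhoffSum T g' n x := by
    rw [ae_all_iff]
    intro q
    by_cases hq : (q : ℝ) < L
    · have hIneg : ∫ x, -f' x ∂μ = -∫ x, f' x ∂μ := integral_neg f'
      have hc : ∫ x, -f' x ∂μ < (-(q : ℝ)) * ∫ x, g' x ∂μ := by
        rw [hIneg]
        have : (q : ℝ) * ∫ x, g' x ∂μ < ∫ x, f' x ∂μ := by
          rw [hL] at hq
          exact (lt_div_iff₀ hIg).mp hq
        linarith
      have hcore := HopfAux.core hT herg hf'm.neg hf'.neg hg'm hg' hIg hSg (-(q : ℝ)) hc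
      filter_upwards [hcore] with x hx hq'
      have hneg : ∀ n, birkhoffSum T (fun y => -f' y) n x = -birkhoffSum T f' n x := by
        intro n
        simp [birkhoffSum, Finset.sum_neg_distrib]
      filter_upwards [hx] with n hn
      rw [show birkhoffSum T (-f') n x = -birkhoffSum T f' n x from hneg n, neg_div] at hn
      linarith
    · exact Eventually.of_forall fun x hcon => absurd hcon hq
  filter_upwards [hupper, hlower, hbirk] with x hu hl hb
  have hfun : (fun n => birkhoff T f n x / birkhoff T g n x)
      = fun n => birkhoffSum T f' n x / birkhoffSum T g' n x :=
    funext fun n => by rw [(hb n).1, (hb n).2]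
  rw [hfun]
  rw [tendsto_order]
  constructor
  · intro b hb'
    obtain ⟨q, hq1, hq2⟩ := exists_rat_btwn hb'
    filter_upwards [hl q hq2] with n hn
    exact lt_trans hq1 hn
  · intro b hb'
    obtain ⟨q, hq1, hq2⟩ := exists_rat_btwn hb'
    filter_upwards [hu q hq1] with n hn
    exact lt_trans hn hq2
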